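/- For h ≥ 1, let P_h be the one-relator group with presentation ⟨x₁, …, x_h | x₁² x₂² ⋯ x_h² ⟩ (the fundamental group of the non-orientable surface N_h of genus h). If there exists a surjective group homomorphism from P_h onto a free group of rank r with r ≥ 2, then h ≥ 4. In particular, there is no epimorphism from ⟨a, b, c | a²b²c²⟩ onto the free group of rank 2. -/

import Mathlib

/-- The relator `x₁² x₂² ⋯ x_h²` of the non-orientable surface of genus `h`. -/
def nonorientableRel (h : ℕ) : FreeGroup (Fin h) :=
  (List.ofFn fun i : Fin h => (FreeGroup.of i) ^ 2).prod

/-- The fundamental group `P_h = ⟨x₁, …, x_h | x₁² x₂² ⋯ x_h²⟩` of the non-orientable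
surface `N_h` of genus `h`. -/
abbrev NonorientableSurfaceGroup (h : ℕ) : Type :=
  PresentedGroup ({nonorientableRel h} : Set (FreeGroup (Fin h)))

/-- The Heisenberg group over `ZMod 2`: used to detect the mod-2 intersection form. -/
@[ext] structure Heis : Type where
  a : ZMod 2
  b : ZMod 2
  c : ZMod 2
  deriving DecidableEq, Fintype

instance : One Heis := ⟨⟨0, 0, 0⟩⟩
instance : Mul Heis := ⟨fun x y => ⟨x.a + y.a, x.b + y.b, x.c + y.c + x.a * y.b⟩⟩
instance : Inv Heis := ⟨fun x => ⟨x.a, x.b, x.c + x.a * x.b⟩⟩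

instance : Group Heis where
  mul_assoc := by decide
  one_mul := by decide
  mul_one := by decide
  inv_mul_cancel := by decide

@[simp] lemma Heis.mul_a (x y : Heis) : (x * y).a = x.a + y.a := rfl
@[simp] lemma Heis.mul_b (x y : Heis) : (x * y).b = x.b + y.b := rfl
@[simp] lemma Heis.mul_c (x y : Heis) : (x * y).c = x.c + y.c + x.a * y.b := rfl
@[simp] lemma Heis.one_a : (1 : Heis).a = 0 := rfl
@[simp] lemma Heis.one_b : (1 : Heis).b = 0 := rfl
@[simp] lemma Heis.one_c : (1 : Heis).c = 0 := rfl

lemma Heis.sq (x : Heis) : x * x = ⟨0, 0, x.a * x.b⟩ := by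
  revert x; decide

/-- Projection onto the first coordinate is a homomorphism. -/
def Heis.pa : Heis →* Multiplicative (ZMod 2) where
  toFun x := Multiplicative.ofAdd x.a
  map_one' := rfl
  map_mul' _ _ := rfl

/-- Projection onto the second coordinate is a homomorphism. -/
def Heis.pb : Heis →* Multiplicative (ZMod 2) where
  toFun x := Multiplicative.ofAdd x.b
  map_one' := rfl
  map_mul' _ _ := rfl

lemma Heis.prod_central (l : List Heis) (h : ∀ x ∈ l, x.a = 0 ∧ x.b = 0) :
    l.prod = ⟨0, 0, (l.map Heis.c).sum⟩ := by
  induction l with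
  | nil => rfl
  | cons x t ih =>
    have hx := h x List.mem_cons_self
    rw [List.prod_cons, ih (fun y hy => h y (List.mem_cons_of_mem _ hy))]
    ext <;> simp [hx.1, hx.2]

/-- Key lemma: if a homomorphism `F` between free groups kills the relator
`x₁² ⋯ x_h²`, then for any two homomorphisms `A B` to `ZMod 2`, the "intersection
pairing" `∑ A(F xᵢ)·B(F xᵢ)` vanishes. -/
lemma heis_key {h r : ℕ} (F : FreeGroup (Fin h) →* FreeGroup (Fin r))
    (hF : F (nonorientableRel h) = 1)
    (A B : FreeGroup (Fin r) →* Multiplicative (ZMod 2)) :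
    ∑ i : Fin h,
      Multiplicative.toAdd (A (F (FreeGroup.of i))) *
        Multiplicative.toAdd (B (F (FreeGroup.of i))) = 0 := by
  set Ψ : FreeGroup (Fin r) →* Heis :=
    FreeGroup.lift (fun j =>
      ⟨Multiplicative.toAdd (A (FreeGroup.of j)),
        Multiplicative.toAdd (B (FreeGroup.of j)), 0⟩) with hΨ
  have hpa : Heis.pa.comp Ψ = A := by
    apply FreeGroup.ext_hom
    intro j
    simp [hΨ, Heis.pa]
  have hpb : Heis.pb.comp Ψ = B := by
    apply FreeGroup.ext_hom
    intro j
    simp [hΨ, Heis.pb]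
  have ha : ∀ w, (Ψ w).a = Multiplicative.toAdd (A w) := by
    intro w
    have := congrArg (fun f => Multiplicative.toAdd (f w)) hpa
    simpa [Heis.pa] using this
  have hb : ∀ w, (Ψ w).b = Multiplicative.toAdd (B w) := by
    intro w
    have := congrArg (fun f => Multiplicative.toAdd (f w)) hpb
    simpa [Heis.pb] using this
  have h1 : Ψ (F (nonorientableRel h)) = 1 := by rw [hF, map_one]
  have h2 : Ψ (F (nonorientableRel h)) =
      ⟨0, 0, ∑ i : Fin h,
        Multiplicative.toAdd (A (F (FreeGroup.of i))) *
          Multiplicative.toAdd (B (F (FreeGroup.of i)))⟩ := by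
    have hsq : ∀ i : Fin h, Ψ (F (FreeGroup.of i ^ 2)) =
        ⟨0, 0, Multiplicative.toAdd (A (F (FreeGroup.of i))) *
          Multiplicative.toAdd (B (F (FreeGroup.of i)))⟩ := by
      intro i
      rw [map_pow, map_pow, pow_two, Heis.sq, ha, hb]
    rw [nonorientableRel, map_list_prod, map_list_prod, List.map_ofFn, List.map_ofFn]
    rw [Heis.prod_central]
    · congr 1
      rw [List.map_ofFn, Fin.sum_ofFn]
      refine Finset.sum_congr rfl fun i _ => ?_
      simp only [Function.comp_apply, hsq]
    · intro x hx
      simp only [List.mem_ofFn, Set.mem_range] at hx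
      obtain ⟨i, hi⟩ := hx
      rw [← hi]
      show (Ψ (F (FreeGroup.of i ^ 2))).a = 0 ∧ (Ψ (F (FreeGroup.of i ^ 2))).b = 0
      rw [hsq]
      exact ⟨rfl, rfl⟩
  rw [h1] at h2
  have := congrArg Heis.c h2
  simpa using this.symm

/-- The finite linear-algebra fact over `𝔽₂`: for `1 ≤ h ≤ 3`, if vectors
`(aᵢ, bᵢ)` satisfy `∑aᵢ = ∑bᵢ = ∑aᵢbᵢ = 0`, then some nonzero linear functional
kills them all (they cannot span `𝔽₂²`). -/
lemma fin_case {h : ℕ} (hh : 1 ≤ h) (hle : h ≤ 3) (a b : Fin h → ZMod 2)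
    (ha : ∑ i, a i = 0) (hb : ∑ i, b i = 0) (hab : ∑ i, a i * b i = 0) :
    ∃ c₁ c₂ : ZMod 2, ¬(c₁ = 0 ∧ c₂ = 0) ∧ ∀ i, c₁ * a i + c₂ * b i = 0 := by
  interval_cases h <;> revert ha hb hab <;> revert a b <;> decide

/-- For `h ≥ 1`, if there is an epimorphism from
`P_h = ⟨x₁, …, x_h | x₁²⋯x_h²⟩` onto a free group of rank `r ≥ 2`, then `h ≥ 4`.
In particular there is no epimorphism from `⟨a, b, c | a²b²c²⟩` onto the free group
of rank `2`. -/
theorem stmt_12 :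
    (∀ h r : ℕ, 1 ≤ h → 2 ≤ r →
      (∃ f : NonorientableSurfaceGroup h →* FreeGroup (Fin r), Function.Surjective f) →
      4 ≤ h) ∧
    ¬ ∃ f : NonorientableSurfaceGroup 3 →* FreeGroup (Fin 2), Function.Surjective f := by
  have main : ∀ h r : ℕ, 1 ≤ h → 2 ≤ r →
      (∃ f : NonorientableSurfaceGroup h →* FreeGroup (Fin r), Function.Surjective f) →
      4 ≤ h := by
    intro h r hh hr ⟨f, hf⟩
    by_contra hcon
    push_neg at hcon
    have hle : h ≤ 3 := by omega
    set F : FreeGroup (Fin h) →* FreeGroup (Fin r) :=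
      f.comp (PresentedGroup.mk ({nonorientableRel h} : Set (FreeGroup (Fin h)))) with hFdef
    have hFrel : F (nonorientableRel h) = 1 := by
      have hmem : nonorientableRel h ∈
          Subgroup.normalClosure ({nonorientableRel h} : Set (FreeGroup (Fin h))) :=
        Subgroup.subset_normalClosure rfl
      have hmk : PresentedGroup.mk ({nonorientableRel h} : Set (FreeGroup (Fin h)))
          (nonorientableRel h) = 1 := (QuotientGroup.eq_one_iff _).mpr hmem
      simp [hFdef, hmk]
    have hFsurj : Function.Surjective F :=
      hf.comp (PresentedGroup.mk_surjective _)
    -- coordinate homomorphisms on the target free group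
    let j₀ : Fin r := ⟨0, by omega⟩
    let j₁ : Fin r := ⟨1, by omega⟩
    have hj : j₀ ≠ j₁ := by simp [j₀, j₁, Fin.ext_iff]
    let e : Fin r → (FreeGroup (Fin r) →* Multiplicative (ZMod 2)) := fun j0 =>
      FreeGroup.lift (fun j => if j = j0 then Multiplicative.ofAdd (1 : ZMod 2) else 1)
    set a : Fin h → ZMod 2 := fun i => Multiplicative.toAdd (e j₀ (F (FreeGroup.of i))) with hadef
    set b : Fin h → ZMod 2 := fun i => Multiplicative.toAdd (e j₁ (F (FreeGroup.of i))) with hbdef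
    have sq_self : ∀ x : ZMod 2, x * x = x := by decide
    have haa : ∑ i, a i = 0 := by
      have := heis_key F hFrel (e j₀) (e j₀)
      simpa [hadef, sq_self] using this
    have hbb : ∑ i, b i = 0 := by
      have := heis_key F hFrel (e j₁) (e j₁)
      simpa [hbdef, sq_self] using this
    have hab : ∑ i, a i * b i = 0 := heis_key F hFrel (e j₀) (e j₁)
    obtain ⟨c₁, c₂, hc, hker⟩ := fin_case hh hle a b haa hbb hab
    -- the combined functional
    let T : FreeGroup (Fin r) →* Multiplicative (ZMod 2) :=
      { toFun := fun w => Multiplicative.ofAdd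
          (c₁ * Multiplicative.toAdd (e j₀ w) + c₂ * Multiplicative.toAdd (e j₁ w)),
        map_one' := by simp,
        map_mul' := by
          intro x y
          simp only [map_mul, toAdd_mul, mul_add, ← ofAdd_add]
          congr 1
          ring }
    have hTF : ∀ g : FreeGroup (Fin h), T (F g) = 1 := by
      have : T.comp F = 1 := by
        apply FreeGroup.ext_hom
        intro i
        show Multiplicative.ofAdd (c₁ * a i + c₂ * b i) = 1
        rw [hker i]
        rfl
      intro g
      have := congrArg (fun f => f g) this
      simpa using this
    have eval : ∀ jx : Fin r, T (FreeGroup.of jx) = Multiplicative.ofAdd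
        (c₁ * (if jx = j₀ then 1 else 0) + c₂ * (if jx = j₁ then 1 else 0)) := by
      intro jx
      show Multiplicative.ofAdd
          (c₁ * Multiplicative.toAdd (e j₀ (FreeGroup.of jx)) +
           c₂ * Multiplicative.toAdd (e j₁ (FreeGroup.of jx))) = _
      have h0 : e j₀ (FreeGroup.of jx) = if jx = j₀ then Multiplicative.ofAdd (1 : ZMod 2) else 1 :=
        FreeGroup.lift_apply_of
      have h1 : e j₁ (FreeGroup.of jx) = if jx = j₁ then Multiplicative.ofAdd (1 : ZMod 2) else 1 :=
        FreeGroup.lift_apply_of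
      rw [h0, h1]
      by_cases hx0 : jx = j₀ <;> by_cases hx1 : jx = j₁
      · exact absurd (hx0.symm.trans hx1) hj
      all_goals simp [hx0, hx1, hj, Ne.symm hj]
    have hc₁ : c₁ = 0 := by
      obtain ⟨g, hg⟩ := hFsurj (FreeGroup.of j₀)
      have := hTF g
      rw [hg, eval j₀] at this
      simp [hj, if_neg (hj : j₀ ≠ j₁)] at this
      exact this
    have hc₂ : c₂ = 0 := by
      obtain ⟨g, hg⟩ := hFsurj (FreeGroup.of j₁)
      have := hTF g
      rw [hg, eval j₁] at this
      simp [if_neg (Ne.symm hj)] at this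
      exact this
    exact hc ⟨hc₁, hc₂⟩
  refine ⟨main, fun hex => ?_⟩
  have := main 3 2 (by norm_num) le_rfl hex
  omega
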